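/- Let 1 < p < ∞ and let (Ω,μ) be a finite measure space. Suppose F_ε, G_ε : Ω → R^n are measurable, uniformly bounded in L^p(Ω;R^n), and ∫_Ω (|F_ε|^{p-2}F_ε − |G_ε|^{p-2}G_ε)·(F_ε − G_ε) dμ → 0 as ε → 0. Then ‖F_ε − G_ε‖_{L^p(Ω)} → 0. -/

import Mathlib

open MeasureTheory Filter Real

lemma aux_rpow_mul_self {p : ℝ} (hp : 0 < p) {a : ℝ} (ha : 0 ≤ a) :
    a ^ (p - 2) * (a * a) = a ^ p := by
  rcases eq_or_lt_of_le ha with h | h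
  · rw [← h, Real.zero_rpow hp.ne', mul_zero, mul_zero]
  · rw [show a * a = a ^ (2 : ℝ) by rw [Real.rpow_two]; ring, ← Real.rpow_add h]
    norm_num

lemma bernoulli_aux {q a b : ℝ} (hq0 : 0 < q) (hq1 : q < 1) (hb : 0 < b) (hab : b ≤ a) :
    q * (a ^ (q - 1) * (a - b)) ≤ a ^ q - b ^ q := by
  have ha : 0 < a := lt_of_lt_of_le hb hab
  have hu : (0:ℝ) ≤ b / a := by positivity
  have key : (b / a) ^ q ≤ q * (b / a) + (1 - q) * 1 := by
    have := Real.geom_mean_le_arith_mean2_weighted hq0.le (by linarith) hu zero_le_one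
      (by ring : q + (1 - q) = 1)
    simpa using this
  have hba : (b / a) ^ q = b ^ q / a ^ q := Real.div_rpow hb.le ha.le q
  have haq : 0 < a ^ q := Real.rpow_pos_of_pos ha q
  set c := a ^ (q - 1) with hc
  have ha1 : c = a ^ q / a := by rw [hc, Real.rpow_sub ha, Real.rpow_one]
  have e1 : c * a = a ^ q := by rw [ha1]; field_simp
  have e3 : q * (c * a) = q * a ^ q := by rw [e1]
  rw [hba] at key
  have h2' : b ^ q ≤ q * b * c + (1 - q) * a ^ q := by
    have e2 : q * (b / a) * a ^ q = q * b * c := by rw [ha1]; field_simp; try ring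
    have := mul_le_mul_of_nonneg_right key haq.le
    rw [div_mul_cancel₀ _ haq.ne'] at this
    nlinarith [this, e2]
  nlinarith [h2', e3]

/-- Scalar core of the `1 < p < 2` monotonicity inequality, value at `t = a*b`,
for `0 < v ≤ u` and `X ≤ u^(p-2)`. -/
lemma scalar_val {p u v X : ℝ} (hp : 1 < p) (hp2 : p < 2) (hv : 0 < v) (huv : v ≤ u)
    (hX0 : 0 ≤ X) (hXu : X ≤ u ^ (p - 2)) :
    (p - 1) * ((u - v) * (u - v)) * X ≤
      u ^ (p - 2) * (u * u) + v ^ (p - 2) * (v * v) - (u ^ (p - 2) + v ^ (p - 2)) * (u * v) := by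
  have hu : 0 < u := lt_of_lt_of_le hv huv
  have hber := bernoulli_aux (by linarith : (0:ℝ) < p - 1) (by linarith) hv huv
  rw [show (p - 1 - 1 : ℝ) = p - 2 by ring] at hber
  have hup : u ^ (p - 1) * u = u ^ p := by
    nth_rewrite 2 [← Real.rpow_one u]
    rw [← Real.rpow_add hu]; norm_num
  have hvp : v ^ (p - 1) * v = v ^ p := by
    nth_rewrite 2 [← Real.rpow_one v]
    rw [← Real.rpow_add hv]; norm_num
  have hu2 : u ^ (p - 2) * u = u ^ (p - 1) := by
    nth_rewrite 2 [← Real.rpow_one u]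
    rw [← Real.rpow_add hu, show (p - 2 + 1 : ℝ) = p - 1 by ring]
  have hv2 : v ^ (p - 2) * v = v ^ (p - 1) := by
    nth_rewrite 2 [← Real.rpow_one v]
    rw [← Real.rpow_add hv, show (p - 2 + 1 : ℝ) = p - 1 by ring]
  -- rewrite everything in terms of u^(p-1), v^(p-1)
  have h1 : u ^ (p - 2) * (u * u) = u ^ (p - 1) * u := by
    rw [show u ^ (p-2) * (u * u) = (u ^ (p-2) * u) * u by ring, hu2]
  have h2 : v ^ (p - 2) * (v * v) = v ^ (p - 1) * v := by
    rw [show v ^ (p-2) * (v * v) = (v ^ (p-2) * v) * v by ring, hv2]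
  have h3 : u ^ (p - 2) * (u * v) = u ^ (p - 1) * v := by
    rw [show u ^ (p-2) * (u * v) = (u ^ (p-2) * u) * v by ring, hu2]
  have h4 : v ^ (p - 2) * (u * v) = v ^ (p - 1) * u := by
    rw [show v ^ (p-2) * (u * v) = (v ^ (p-2) * v) * u by ring, hv2]
  have m1 : X * (u - v) ≤ u ^ (p - 2) * (u - v) :=
    mul_le_mul_of_nonneg_right hXu (by linarith)
  have m2 : (p - 1) * (X * (u - v)) ≤ (p - 1) * (u ^ (p - 2) * (u - v)) :=
    mul_le_mul_of_nonneg_left m1 (by linarith)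
  have m3 : (p - 1) * (X * (u - v)) * (u - v) ≤ (u ^ (p - 1) - v ^ (p - 1)) * (u - v) :=
    mul_le_mul_of_nonneg_right (le_trans m2 hber) (by linarith)
  nlinarith [m3, h1, h2, h3, h4]

/-- Scalar core: for all `a b ≥ 0`, `|t| ≤ a*b`. -/
lemma scalar_key {p a b t : ℝ} (hp : 1 < p) (hp2 : p < 2) (ha0 : 0 ≤ a) (hb0 : 0 ≤ b)
    (ht1 : t ≤ a * b) (ht2 : -(a * b) ≤ t) :
    (p - 1) * ((a * a + b * b - 2 * t) * (a + b) ^ (p - 2)) ≤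
      a ^ (p - 2) * (a * a) + b ^ (p - 2) * (b * b) - (a ^ (p - 2) + b ^ (p - 2)) * t := by
  have hp0 : (0:ℝ) < p := by linarith
  rcases eq_or_lt_of_le ha0 with h0a | h0a
  · -- a = 0, hence t = 0
    have ht0 : t = 0 := by rw [← h0a] at ht1 ht2; simp at ht1 ht2; linarith
    rw [← h0a, ht0]
    rcases eq_or_lt_of_le hb0 with h0b | h0b
    · rw [← h0b]
      norm_num [Real.zero_rpow (show (p - 2 : ℝ) ≠ 0 by linarith)]
    · rw [Real.zero_rpow (show (p - 2 : ℝ) ≠ 0 by linarith)]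
      have hbp := aux_rpow_mul_self hp0 hb0
      have hbpos : 0 < b ^ p := Real.rpow_pos_of_pos h0b p
      simp only [zero_add, mul_zero, zero_mul, sub_zero, add_zero, zero_sub, neg_zero]
      nlinarith [hbp, hbpos]
  rcases eq_or_lt_of_le hb0 with h0b | h0b
  · have ht0 : t = 0 := by rw [← h0b] at ht1 ht2; simp at ht1 ht2; linarith
    rw [← h0b, ht0]
    rw [Real.zero_rpow (show (p - 2 : ℝ) ≠ 0 by linarith)]
    have hap := aux_rpow_mul_self hp0 ha0
    have hapos : 0 < a ^ p := Real.rpow_pos_of_pos h0a p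
    simp only [add_zero, mul_zero, zero_mul, sub_zero, zero_add, zero_sub, neg_zero]
    nlinarith [hap, hapos]
  -- a, b > 0
  have hab : 0 < a + b := by linarith
  set X := (a + b) ^ (p - 2) with hX
  have hX0 : 0 < X := Real.rpow_pos_of_pos hab _
  have hXa : X ≤ a ^ (p - 2) :=
    Real.rpow_le_rpow_of_nonpos h0a (by linarith) (by linarith)
  have hXb : X ≤ b ^ (p - 2) :=
    Real.rpow_le_rpow_of_nonpos h0b (by linarith) (by linarith)
  have hval : (p - 1) * ((a - b) * (a - b)) * X ≤
      a ^ (p - 2) * (a * a) + b ^ (p - 2) * (b * b) -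
        (a ^ (p - 2) + b ^ (p - 2)) * (a * b) := by
    rcases le_total b a with h | h
    · exact scalar_val hp hp2 h0b h hX0.le hXa
    · have := scalar_val hp hp2 h0a h hX0.le hXb
      nlinarith [this]
  have hprod : 0 ≤ (a ^ (p - 2) + b ^ (p - 2) - 2 * (p - 1) * X) * (a * b - t) := by
    apply mul_nonneg
    · nlinarith
    · linarith
  nlinarith [hval, hprod]

section Vector
variable {E : Type*} [NormedAddCommGroup E] [InnerProductSpace ℝ E]

lemma inner_expand (p : ℝ) (x y : E) :
    (inner ℝ (‖x‖ ^ (p - 2) • x - ‖y‖ ^ (p - 2) • y) (x - y) : ℝ) =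
      ‖x‖ ^ (p - 2) * (‖x‖ * ‖x‖) + ‖y‖ ^ (p - 2) * (‖y‖ * ‖y‖)
        - (‖x‖ ^ (p - 2) + ‖y‖ ^ (p - 2)) * (inner ℝ x y : ℝ) := by
  simp [inner_sub_left, inner_sub_right, real_inner_smul_left,
    real_inner_self_eq_norm_mul_norm, real_inner_comm x y]
  ring

lemma norm_sub_mul_self' (x y : E) :
    ‖x - y‖ * ‖x - y‖ = ‖x‖ * ‖x‖ + ‖y‖ * ‖y‖ - 2 * (inner ℝ x y : ℝ) := by
  have := @norm_sub_sq_real E _ _ x y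
  nlinarith [this, sq_nonneg (‖x - y‖)]

lemma key_half (p : ℝ) (hp : 2 ≤ p) (x y : E) :
    (1 / 2) * ((‖x‖ ^ (p - 2) + ‖y‖ ^ (p - 2)) * (‖x - y‖ * ‖x - y‖)) ≤
      (inner ℝ (‖x‖ ^ (p - 2) • x - ‖y‖ ^ (p - 2) • y) (x - y) : ℝ) := by
  have hp0 : (0 : ℝ) < p := by linarith
  set a := ‖x‖ with ha; set b := ‖y‖ with hb
  have ha0 : 0 ≤ a := norm_nonneg _
  have hb0 : 0 ≤ b := norm_nonneg _
  rw [inner_expand, norm_sub_mul_self']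
  have hmono : 0 ≤ (a ^ (p - 2) - b ^ (p - 2)) * (a * a - b * b) := by
    rcases le_total a b with h | h
    · have h1 : a ^ (p - 2) ≤ b ^ (p - 2) := Real.rpow_le_rpow ha0 h (by linarith)
      have h2 : a * a ≤ b * b := mul_self_le_mul_self ha0 h
      nlinarith
    · have h1 : b ^ (p - 2) ≤ a ^ (p - 2) := Real.rpow_le_rpow hb0 h (by linarith)
      have h2 : b * b ≤ a * a := mul_self_le_mul_self hb0 h
      nlinarith
  nlinarith [aux_rpow_mul_self hp0 ha0, aux_rpow_mul_self hp0 hb0]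

lemma key_ge {p : ℝ} (hp : 2 ≤ p) (x y : E) :
    ‖x - y‖ ^ p ≤ 2 ^ (p - 1) *
      (inner ℝ (‖x‖ ^ (p - 2) • x - ‖y‖ ^ (p - 2) • y) (x - y) : ℝ) := by
  have hp0 : (0 : ℝ) < p := by linarith
  set a := ‖x‖; set b := ‖y‖; set d := ‖x - y‖ with hd
  have ha0 : 0 ≤ a := norm_nonneg _
  have hb0 : 0 ≤ b := norm_nonneg _
  have hd0 : 0 ≤ d := norm_nonneg _
  have hinner := key_half p hp x y
  have h2 : (0:ℝ) < 2 ^ (p - 1) := Real.rpow_pos_of_pos two_pos _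
  rcases eq_or_lt_of_le hd0 with h0 | h0
  · rw [← h0, Real.zero_rpow hp0.ne']
    have : 0 ≤ (inner ℝ (‖x‖ ^ (p - 2) • x - ‖y‖ ^ (p - 2) • y) (x - y) : ℝ) := by
      nlinarith [Real.rpow_nonneg ha0 (p-2), Real.rpow_nonneg hb0 (p-2), mul_self_nonneg d]
    positivity
  have hdab : d ≤ a + b := norm_sub_le x y
  have hmax : d ≤ 2 * max a b := by
    rcases le_total a b with h | h
    · rw [max_eq_right h]; linarith
    · rw [max_eq_left h]; linarith
  have hstep : d ^ (p - 2) ≤ 2 ^ (p - 2) * (a ^ (p - 2) + b ^ (p - 2)) := by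
    calc d ^ (p - 2) ≤ (2 * max a b) ^ (p - 2) :=
          Real.rpow_le_rpow hd0 hmax (by linarith)
      _ = 2 ^ (p - 2) * (max a b) ^ (p - 2) := Real.mul_rpow (by norm_num) (le_max_of_le_left ha0)
      _ ≤ 2 ^ (p - 2) * (a ^ (p - 2) + b ^ (p - 2)) := by
          gcongr
          rcases le_total a b with h | h
          · rw [max_eq_right h]
            nlinarith [Real.rpow_nonneg ha0 (p-2)]
          · rw [max_eq_left h]
            nlinarith [Real.rpow_nonneg hb0 (p-2)]
  have hdp : d ^ p = d ^ (p - 2) * (d * d) := (aux_rpow_mul_self hp0 hd0).symm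
  have h2p2 : (0:ℝ) < 2 ^ (p - 2) := Real.rpow_pos_of_pos two_pos _
  calc d ^ p = d ^ (p - 2) * (d * d) := hdp
    _ ≤ 2 ^ (p - 2) * (a ^ (p - 2) + b ^ (p - 2)) * (d * d) := by
        gcongr
    _ = 2 ^ (p - 1) * ((1/2) * ((a ^ (p - 2) + b ^ (p - 2)) * (d * d))) := by
        field_simp
        rw [show (p - 1 : ℝ) = (p - 2) + 1 by ring, Real.rpow_add two_pos]
        ring
    _ ≤ 2 ^ (p - 1) * (inner ℝ (‖x‖ ^ (p - 2) • x - ‖y‖ ^ (p - 2) • y) (x - y) : ℝ) := by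
        gcongr

lemma key_lt {p : ℝ} (hp : 1 < p) (hp2 : p < 2) (x y : E) :
    (p - 1) * ((‖x - y‖ * ‖x - y‖) * (‖x‖ + ‖y‖) ^ (p - 2)) ≤
      (inner ℝ (‖x‖ ^ (p - 2) • x - ‖y‖ ^ (p - 2) • y) (x - y) : ℝ) := by
  rw [inner_expand, norm_sub_mul_self']
  have ht1 : (inner ℝ x y : ℝ) ≤ ‖x‖ * ‖y‖ := real_inner_le_norm x y
  have ht2 : -(‖x‖ * ‖y‖) ≤ (inner ℝ x y : ℝ) := by
    have := abs_real_inner_le_norm x y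
    cases' abs_le.mp this with h _
    linarith
  exact scalar_key hp hp2 (norm_nonneg x) (norm_nonneg y) ht1 ht2

lemma key_inner_nonneg {p : ℝ} (hp : 1 < p) (x y : E) :
    0 ≤ (inner ℝ (‖x‖ ^ (p - 2) • x - ‖y‖ ^ (p - 2) • y) (x - y) : ℝ) := by
  rcases le_or_gt 2 p with h | h
  · refine le_trans ?_ (key_half p h x y)
    have := Real.rpow_nonneg (norm_nonneg x) (p - 2)
    have := Real.rpow_nonneg (norm_nonneg y) (p - 2)
    have := mul_self_nonneg (‖x - y‖)
    positivity
  · refine le_trans ?_ (key_lt hp h x y)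
    have h1 := mul_self_nonneg (‖x - y‖)
    have h2 := Real.rpow_nonneg (by positivity : (0:ℝ) ≤ ‖x‖ + ‖y‖) (p - 2)
    have : (0:ℝ) ≤ p - 1 := by linarith
    positivity

end Vector

lemma add_rpow_le {p a b : ℝ} (hp : 0 ≤ p) (ha : 0 ≤ a) (hb : 0 ≤ b) :
    (a + b) ^ p ≤ 2 ^ p * (a ^ p + b ^ p) := by
  have hmax : a + b ≤ 2 * max a b := by
    rcases le_total a b with h | h
    · rw [max_eq_right h]; linarith
    · rw [max_eq_left h]; linarith
  calc (a + b) ^ p ≤ (2 * max a b) ^ p := Real.rpow_le_rpow (by positivity) hmax hp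
    _ = 2 ^ p * (max a b) ^ p := Real.mul_rpow (by norm_num) (le_max_of_le_left ha)
    _ ≤ 2 ^ p * (a ^ p + b ^ p) := by
        gcongr
        rcases le_total a b with h | h
        · rw [max_eq_right h]
          nlinarith [Real.rpow_nonneg ha p]
        · rw [max_eq_left h]
          nlinarith [Real.rpow_nonneg hb p]

theorem monotonicity_implies_strong_convergence (α : Type*) [MeasurableSpace α]
    (μ : Measure α) [IsFiniteMeasure μ] (n : ℕ) (p C : ℝ) (hp : 1 < p) (hC : 0 < C)
    (F G : ℕ → α → EuclideanSpace ℝ (Fin n))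
    (hF : ∀ k, Measurable (F k)) (hG : ∀ k, Measurable (G k))
    (hFbd : ∀ k, (∫⁻ x, ENNReal.ofReal (‖F k x‖ ^ p) ∂μ) ≤ ENNReal.ofReal C)
    (hGbd : ∀ k, (∫⁻ x, ENNReal.ofReal (‖G k x‖ ^ p) ∂μ) ≤ ENNReal.ofReal C)
    (hmono : Tendsto
      (fun k => ∫⁻ x, ENNReal.ofReal
        (inner ℝ (‖F k x‖ ^ (p - 2) • F k x - ‖G k x‖ ^ (p - 2) • G k x)
          (F k x - G k x) : ℝ) ∂μ) atTop (nhds 0)) :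
    Tendsto (fun k => ∫⁻ x, ENNReal.ofReal (‖F k x - G k x‖ ^ p) ∂μ)
      atTop (nhds 0) := by
  have hp0 : (0:ℝ) < p := by linarith
  set I : ℕ → ENNReal := fun k => ∫⁻ x, ENNReal.ofReal
      (inner ℝ (‖F k x‖ ^ (p - 2) • F k x - ‖G k x‖ ^ (p - 2) • G k x)
        (F k x - G k x) : ℝ) ∂μ with hI
  rcases le_or_gt 2 p with hp2 | hp2
  · -- p ≥ 2
    have hbound : ∀ k, (∫⁻ x, ENNReal.ofReal (‖F k x - G k x‖ ^ p) ∂μ) ≤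
        ENNReal.ofReal (2 ^ (p - 1)) * I k := by
      intro k
      calc (∫⁻ x, ENNReal.ofReal (‖F k x - G k x‖ ^ p) ∂μ)
          ≤ ∫⁻ x, ENNReal.ofReal (2 ^ (p - 1) *
              (inner ℝ (‖F k x‖ ^ (p - 2) • F k x - ‖G k x‖ ^ (p - 2) • G k x)
                (F k x - G k x) : ℝ)) ∂μ :=
            lintegral_mono fun x => ENNReal.ofReal_le_ofReal (key_ge hp2 _ _)
        _ = ∫⁻ x, ENNReal.ofReal (2 ^ (p - 1)) * ENNReal.ofReal
              (inner ℝ (‖F k x‖ ^ (p - 2) • F k x - ‖G k x‖ ^ (p - 2) • G k x)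
                (F k x - G k x) : ℝ) ∂μ := by
            refine lintegral_congr fun x => ?_
            exact ENNReal.ofReal_mul (by positivity)
        _ = ENNReal.ofReal (2 ^ (p - 1)) * I k :=
            lintegral_const_mul' _ _ ENNReal.ofReal_ne_top
    have hT : Tendsto (fun k => ENNReal.ofReal (2 ^ (p - 1)) * I k) atTop (nhds 0) := by
      have := ENNReal.Tendsto.const_mul (a := ENNReal.ofReal (2 ^ (p - 1))) hmono (Or.inr ENNReal.ofReal_ne_top)
      simpa using this
    exact tendsto_of_tendsto_of_tendsto_of_le_of_le tendsto_const_nhds hT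
      (fun k => zero_le) hbound
  · -- 1 < p < 2
    have hq : (0:ℝ) < p - 1 := by linarith
    have h2p : (0:ℝ) < 2 - p := by linarith
    set c : ENNReal := ENNReal.ofReal ((p - 1)⁻¹) with hc
    set D : ENNReal := ENNReal.ofReal (2 ^ p) * (ENNReal.ofReal C + ENNReal.ofReal C) with hD
    have hDne : D ≠ ⊤ := ENNReal.mul_ne_top ENNReal.ofReal_ne_top
      (ENNReal.add_ne_top.mpr ⟨ENNReal.ofReal_ne_top, ENNReal.ofReal_ne_top⟩)
    have hbound : ∀ k, (∫⁻ x, ENNReal.ofReal (‖F k x - G k x‖ ^ p) ∂μ) ≤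
        (c * I k) ^ (p / 2) * D ^ ((2 - p) / 2) := by
      intro k
      set φ : α → ENNReal := fun x =>
        ENNReal.ofReal ((‖F k x - G k x‖ * ‖F k x - G k x‖) *
          (‖F k x‖ + ‖G k x‖) ^ (p - 2)) with hφ
      set ψ : α → ENNReal := fun x =>
        ENNReal.ofReal ((‖F k x‖ + ‖G k x‖) ^ p) with hψ
      have mφ : Measurable φ := by
        apply Measurable.ennreal_ofReal
        exact ((((hF k).sub (hG k)).norm.mul ((hF k).sub (hG k)).norm).mul
          (((hF k).norm.add (hG k).norm).pow measurable_const))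
      have mψ : Measurable ψ := by
        apply Measurable.ennreal_ofReal
        exact ((hF k).norm.add (hG k).norm).pow measurable_const
      have hconj : (2 / p).HolderConjugate (2 / (2 - p)) := by
        rw [Real.holderConjugate_iff]
        constructor
        · rw [lt_div_iff₀ hp0]; linarith
        · rw [inv_div, inv_div]; ring_nf
      have mf : Measurable fun x => φ x ^ (p / 2) := mφ.pow measurable_const
      have mg : Measurable fun x => ψ x ^ ((2 - p) / 2) := mψ.pow measurable_const
      have holder := ENNReal.lintegral_mul_le_Lp_mul_Lq μ hconj mf.aemeasurable mg.aemeasurable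
      have hexp1 : ∀ x : α, (φ x ^ (p / 2)) ^ (2 / p) = φ x := fun x => by
        rw [← ENNReal.rpow_mul, show (p / 2) * (2 / p) = 1 by field_simp, ENNReal.rpow_one]
      have hexp2 : ∀ x : α, (ψ x ^ ((2 - p) / 2)) ^ (2 / (2 - p)) = ψ x := fun x => by
        rw [← ENNReal.rpow_mul, show ((2 - p) / 2) * (2 / (2 - p)) = 1 by field_simp,
          ENNReal.rpow_one]
      -- pointwise Hölder decomposition
      have hpt : ∀ x : α, ENNReal.ofReal (‖F k x - G k x‖ ^ p) ≤
          φ x ^ (p / 2) * ψ x ^ ((2 - p) / 2) := by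
        intro x
        have hd0 : (0:ℝ) ≤ ‖F k x - G k x‖ := norm_nonneg _
        have hs0 : (0:ℝ) ≤ ‖F k x‖ + ‖G k x‖ := by positivity
        rcases eq_or_lt_of_le hs0 with h0 | h0
        · have h1 : ‖F k x‖ = 0 := by
            have := norm_nonneg (F k x); have := norm_nonneg (G k x); linarith
          have h2 : ‖G k x‖ = 0 := by
            have := norm_nonneg (F k x); have := norm_nonneg (G k x); linarith
          have e1 : F k x = 0 := norm_eq_zero.mp h1
          have e2 : G k x = 0 := norm_eq_zero.mp h2
          rw [e1, e2, sub_zero, norm_zero, Real.zero_rpow hp0.ne', ENNReal.ofReal_zero]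
          exact zero_le
        · apply le_of_eq
          set d := ‖F k x - G k x‖ with hdd
          set s := ‖F k x‖ + ‖G k x‖ with hss
          have e2 : (d ^ (2:ℝ)) ^ (p / 2) = d ^ p := by
            rw [← Real.rpow_mul hd0, show (2:ℝ) * (p / 2) = p by ring]
          have e3 : (s ^ (p - 2)) ^ (p / 2) * (s ^ p) ^ ((2 - p) / 2) = 1 := by
            rw [← Real.rpow_mul hs0, ← Real.rpow_mul hs0, ← Real.rpow_add h0,
              show (p - 2) * (p / 2) + p * ((2 - p) / 2) = 0 by ring, Real.rpow_zero]
          have ereal : (d * d * s ^ (p - 2)) ^ (p / 2) * (s ^ p) ^ ((2 - p) / 2) = d ^ p := by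
            have hdd2 : d * d * s ^ (p - 2) = d ^ (2:ℝ) * s ^ (p - 2) := by
              rw [Real.rpow_two]; ring
            rw [hdd2, Real.mul_rpow (by positivity) (by positivity)]
            calc (d ^ (2:ℝ)) ^ (p/2) * (s ^ (p-2)) ^ (p/2) * (s ^ p) ^ ((2-p)/2)
                = (d ^ (2:ℝ)) ^ (p/2) * ((s ^ (p-2)) ^ (p/2) * (s ^ p) ^ ((2-p)/2)) := by ring
              _ = d ^ p := by rw [e2, e3, mul_one]
          have u1 : φ x ^ (p / 2) = ENNReal.ofReal ((d * d * s ^ (p - 2)) ^ (p / 2)) := by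
            simp only [hφ]
            rw [ENNReal.ofReal_rpow_of_nonneg (by positivity) (by positivity)]
          have u2 : ψ x ^ ((2 - p) / 2) = ENNReal.ofReal ((s ^ p) ^ ((2 - p) / 2)) := by
            simp only [hψ]
            rw [ENNReal.ofReal_rpow_of_nonneg (by positivity) (by positivity)]
          rw [u1, u2, ← ENNReal.ofReal_mul (by positivity), ereal]
      -- integral bounds for the two factors
      have hφle : (∫⁻ x, φ x ∂μ) ≤ c * I k := by
        have hptφ : ∀ x : α, (‖F k x - G k x‖ * ‖F k x - G k x‖) *
            (‖F k x‖ + ‖G k x‖) ^ (p - 2) ≤ (p - 1)⁻¹ *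
            (inner ℝ (‖F k x‖ ^ (p - 2) • F k x - ‖G k x‖ ^ (p - 2) • G k x)
              (F k x - G k x) : ℝ) := by
          intro x
          have h := key_lt hp hp2 (F k x) (G k x)
          have := mul_le_mul_of_nonneg_left h (by positivity : (0:ℝ) ≤ (p - 1)⁻¹)
          rw [← mul_assoc, inv_mul_cancel₀ (by linarith : (p:ℝ) - 1 ≠ 0), one_mul] at this
          exact this
        calc (∫⁻ x, φ x ∂μ) ≤ ∫⁻ x, ENNReal.ofReal ((p - 1)⁻¹ *
              (inner ℝ (‖F k x‖ ^ (p - 2) • F k x - ‖G k x‖ ^ (p - 2) • G k x)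
                (F k x - G k x) : ℝ)) ∂μ :=
              lintegral_mono fun x => ENNReal.ofReal_le_ofReal (hptφ x)
          _ = ∫⁻ x, c * ENNReal.ofReal
              (inner ℝ (‖F k x‖ ^ (p - 2) • F k x - ‖G k x‖ ^ (p - 2) • G k x)
                (F k x - G k x) : ℝ) ∂μ := by
              refine lintegral_congr fun x => ?_
              rw [hc, ENNReal.ofReal_mul (by positivity)]
          _ = c * I k := lintegral_const_mul' _ _ ENNReal.ofReal_ne_top
      have hψle : (∫⁻ x, ψ x ∂μ) ≤ D := by
        calc (∫⁻ x, ψ x ∂μ)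
            ≤ ∫⁻ x, ENNReal.ofReal (2 ^ p * (‖F k x‖ ^ p + ‖G k x‖ ^ p)) ∂μ :=
              lintegral_mono fun x => ENNReal.ofReal_le_ofReal
                (add_rpow_le hp0.le (norm_nonneg _) (norm_nonneg _))
          _ = ∫⁻ x, ENNReal.ofReal (2 ^ p) *
              (ENNReal.ofReal (‖F k x‖ ^ p) + ENNReal.ofReal (‖G k x‖ ^ p)) ∂μ := by
              refine lintegral_congr fun x => ?_
              rw [ENNReal.ofReal_mul (by positivity),
                ENNReal.ofReal_add (by positivity) (by positivity)]
          _ = ENNReal.ofReal (2 ^ p) *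
              ∫⁻ x, (ENNReal.ofReal (‖F k x‖ ^ p) + ENNReal.ofReal (‖G k x‖ ^ p)) ∂μ :=
              lintegral_const_mul' _ _ ENNReal.ofReal_ne_top
          _ = ENNReal.ofReal (2 ^ p) * ((∫⁻ x, ENNReal.ofReal (‖F k x‖ ^ p) ∂μ) +
              ∫⁻ x, ENNReal.ofReal (‖G k x‖ ^ p) ∂μ) := by
              rw [lintegral_add_left (((hF k).norm.pow measurable_const).ennreal_ofReal)]
          _ ≤ D := by
              rw [hD]
              gcongr
              exacts [hFbd k, hGbd k]
      calc (∫⁻ x, ENNReal.ofReal (‖F k x - G k x‖ ^ p) ∂μ)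
          ≤ ∫⁻ x, φ x ^ (p / 2) * ψ x ^ ((2 - p) / 2) ∂μ := lintegral_mono hpt
        _ = ∫⁻ x, ((fun x => φ x ^ (p / 2)) * fun x => ψ x ^ ((2 - p) / 2)) x ∂μ := rfl
        _ ≤ (∫⁻ x, (φ x ^ (p / 2)) ^ (2 / p) ∂μ) ^ (1 / (2 / p)) *
            (∫⁻ x, (ψ x ^ ((2 - p) / 2)) ^ (2 / (2 - p)) ∂μ) ^ (1 / (2 / (2 - p))) := holder
        _ = (∫⁻ x, φ x ∂μ) ^ (p / 2) * (∫⁻ x, ψ x ∂μ) ^ ((2 - p) / 2) := by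
            rw [one_div_div, one_div_div]
            congr 1
            · congr 1
              exact lintegral_congr hexp1
            · congr 1
              exact lintegral_congr hexp2
        _ ≤ (c * I k) ^ (p / 2) * D ^ ((2 - p) / 2) :=
            mul_le_mul' (ENNReal.rpow_le_rpow hφle (by linarith))
              (ENNReal.rpow_le_rpow hψle (by linarith))
    have T1 : Tendsto (fun k => c * I k) atTop (nhds 0) := by
      have := ENNReal.Tendsto.const_mul (a := c) hmono (Or.inr ENNReal.ofReal_ne_top)
      simpa using this
    have T2 : Tendsto (fun k => (c * I k) ^ (p / 2)) atTop (nhds 0) := by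
      have := T1.ennrpow_const (p / 2)
      rwa [ENNReal.zero_rpow_of_pos (by linarith)] at this
    have T3 : Tendsto (fun k => (c * I k) ^ (p / 2) * D ^ ((2 - p) / 2)) atTop (nhds 0) := by
      have := ENNReal.Tendsto.mul_const (b := D ^ ((2 - p) / 2)) T2
        (Or.inr (ENNReal.rpow_ne_top_of_nonneg (y := (2 - p) / 2) (by linarith) hDne))
      simpa using this
    exact tendsto_of_tendsto_of_tendsto_of_le_of_le tendsto_const_nhds T3
      (fun k => zero_le) hbound
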